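/- The field L = ℚ(ζ, w) is a splitting field of X^{p^n} − a over ℚ, with [L : ℚ] = p^n·φ(p^n) = p^{2n−1}(p−1), [ℚ(w) : ℚ] = p^n, and ℚ(w) ∩ ℚ(ζ) = ℚ; consequently L is the normal closure of ℚ(w)/ℚ inside ℂ. -/

import Mathlib

open Polynomial IntermediateField

set_option maxHeartbeats 1000000 in
set_option synthInstance.maxHeartbeats 100000 in
/-- If `a` is not a `p`-th power in `ℚ` but has a `p`-th root `u ∈ ℂ` lying in `ℚ(ζ)`
(`ζ` a primitive `p^n`-th root of unity), we get a contradiction. -/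
lemma stmt19_aux_not_mem (p n : ℕ) (hp : p.Prime) (hp2 : p ≠ 2) (hn : 1 ≤ n)
    (a : ℚ) (hpow : ∀ b : ℚ, b ^ p ≠ a)
    (ζ : ℂ) (hζ : IsPrimitiveRoot ζ (p ^ n))
    (u : ℂ) (hu0 : u ≠ 0) (hup : u ^ p = (a : ℂ))
    (humem : u ∈ IntermediateField.adjoin ℚ {ζ}) : False := by
  set K : IntermediateField ℚ ℂ := IntermediateField.adjoin ℚ {ζ} with hK
  have hNpos : 0 < p ^ n := pow_pos hp.pos n
  have hζint : IsIntegral ℚ ζ := (hζ.isIntegral hNpos).tower_top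
  haveI : FiniteDimensional ℚ ↥K := IntermediateField.adjoin.finiteDimensional hζint
  -- cyclotomic extension instances
  let n' : ℕ+ := ⟨p ^ n, hNpos⟩
  have hζ' : IsPrimitiveRoot ζ ((n' : ℕ)) := hζ
  haveI instCyc : IsCyclotomicExtension {(n' : ℕ)} ℚ ↥K := by
    have H := IntermediateField.adjoin_simple_toSubalgebra_of_isAlgebraic hζint.isAlgebraic
    refine IsCyclotomicExtension.equiv _ _ _ (h := ?_) (.refl : K.toSubalgebra ≃ₐ[ℚ] _)
    rw [hK, H]
    exact hζ'.adjoin_isCyclotomicExtension ℚ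
  haveI : IsGalois ℚ ↥K := IsCyclotomicExtension.isGalois {(n' : ℕ)} ℚ ↥K
  have hcomm : ∀ x y : (↥K ≃ₐ[ℚ] ↥K), x * y = y * x := by
    have := IsCyclotomicExtension.isMulCommutative {(n' : ℕ)} ℚ ↥K
    exact fun x y => this.is_comm.comm x y
  -- the intermediate field E = ℚ(u) inside K
  set u' : ↥K := ⟨u, humem⟩ with hu'
  set E : IntermediateField ℚ ↥K := IntermediateField.adjoin ℚ {u'} with hE
  haveI : E.fixingSubgroup.Normal :=
    ⟨fun x hx g => by rw [hcomm g x, mul_inv_cancel_right]; exact hx⟩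
  haveI hgalE : IsGalois ℚ ↥E := by
    have h1 := IsGalois.of_fixedField_normal_subgroup (K := ℚ) (L := ↥K) E.fixingSubgroup
    have h2 : IntermediateField.fixedField E.fixingSubgroup = E :=
      IsGalois.fixedField_fixingSubgroup E
    exact h2 ▸ h1
  haveI : Normal ℚ ↥E := hgalE.to_normal
  -- minimal polynomial of u is X^p - a
  have hg_irr : Irreducible ((X : ℚ[X]) ^ p - C a) := X_pow_sub_C_irreducible_of_prime hp hpow
  have hg_monic : ((X : ℚ[X]) ^ p - C a).Monic := monic_X_pow_sub_C a hp.ne_zero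
  have hg_ne : ((X : ℚ[X]) ^ p - C a) ≠ 0 := hg_monic.ne_zero
  -- the generator of E
  have humem' : u' ∈ E := IntermediateField.mem_adjoin_simple_self ℚ u'
  set e : ↥E := ⟨u', humem'⟩ with he
  let homE : ↥E →ₐ[ℚ] ℂ :=
    (IsScalarTower.toAlgHom ℚ ↥K ℂ).comp (IsScalarTower.toAlgHom ℚ ↥E ↥K)
  have hinjE : Function.Injective homE := homE.toRingHom.injective
  have he_im : homE e = u := rfl
  have halgR : algebraMap ℚ ℂ a = (a : ℂ) := eq_ratCast _ a
  have hu'root : aeval u' ((X : ℚ[X]) ^ p - C a) = 0 := by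
    apply (algebraMap ↥K ℂ).injective
    rw [map_zero, ← aeval_algebraMap_apply]
    show aeval u ((X : ℚ[X]) ^ p - C a) = 0
    rw [map_sub, map_pow, aeval_X, aeval_C, hup, halgR, sub_self]
  have he_root : aeval e ((X : ℚ[X]) ^ p - C a) = 0 := by
    apply (algebraMap ↥E ↥K).injective
    rw [map_zero, ← aeval_algebraMap_apply]
    exact hu'root
  have hmine : minpoly ℚ e = (X : ℚ[X]) ^ p - C a :=
    (minpoly.eq_of_irreducible_of_monic hg_irr he_root hg_monic).symm
  have hsplit : (((X : ℚ[X]) ^ p - C a).map (algebraMap ℚ ↥E)).Splits :=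
    hmine ▸ Normal.splits inferInstance e
  have himg := hsplit.image_rootSet homE
  -- ζp := ζ ^ (p^(n-1)) is a primitive p-th root of unity
  have hprod : p ^ n = p ^ (n - 1) * p := by rw [← pow_succ, Nat.sub_add_cancel hn]
  have hζp : IsPrimitiveRoot (ζ ^ (p ^ (n - 1))) p := hζ.pow hNpos hprod
  have hζp_pow : (ζ ^ (p ^ (n - 1))) ^ p = 1 := by
    rw [← pow_mul, ← hprod]; exact hζ.pow_eq_one
  -- u * ζp is another root of X^p - a in ℂ
  have hroot2 : (u * ζ ^ (p ^ (n - 1))) ∈ ((X : ℚ[X]) ^ p - C a).rootSet ℂ := by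
    rw [mem_rootSet]
    refine ⟨hg_ne, ?_⟩
    rw [map_sub, map_pow, aeval_X, aeval_C, mul_pow, hup, hζp_pow, mul_one, halgR, sub_self]
  rw [← himg] at hroot2
  obtain ⟨r, hr, hru⟩ := hroot2
  have he0 : e ≠ 0 := by
    intro h
    apply hu0
    rw [← he_im, h, map_zero]
  -- s := r / e maps to ζp
  have hs_im : homE (r * e⁻¹) = ζ ^ (p ^ (n - 1)) := by
    rw [map_mul, map_inv₀, hru, he_im]
    field_simp
  have hsprim : IsPrimitiveRoot (r * e⁻¹) p := by
    refine IsPrimitiveRoot.of_map_of_injective ?_ hinjE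
    rw [hs_im]; exact hζp
  haveI : CharZero ↥E := charZero_of_injective_algebraMap (algebraMap ℚ ↥E).injective
  have hsint : IsIntegral ℚ (r * e⁻¹) := IsIntegral.of_finite ℚ _
  have hdvd : (minpoly ℚ (r * e⁻¹)).natDegree ∣ Module.finrank ℚ ↥E := minpoly.degree_dvd hsint
  have hmins : minpoly ℚ (r * e⁻¹) = cyclotomic p ℚ :=
    (cyclotomic_eq_minpoly_rat hsprim hp.pos).symm
  have hminu' : minpoly ℚ u' = (X : ℚ[X]) ^ p - C a :=
    (minpoly.eq_of_irreducible_of_monic hg_irr hu'root hg_monic).symm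
  have hfr : Module.finrank ℚ ↥E = p := by
    rw [hE, adjoin.finrank (IsIntegral.of_finite ℚ u'), hminu', natDegree_X_pow_sub_C]
  rw [hmins, natDegree_cyclotomic, Nat.totient_prime hp, hfr] at hdvd
  have h1 : p - 1 ∣ 1 := by
    have := Nat.dvd_sub hdvd (dvd_refl (p - 1))
    rwa [Nat.sub_sub_self hp.one_lt.le] at this
  have h2 := Nat.le_of_dvd one_pos h1
  have h3 := hp.two_le
  omega


set_option maxHeartbeats 1000000 in
set_option synthInstance.maxHeartbeats 100000 in
/-- `L = ℚ(ζ, w)` is a splitting field of `X^{p^n} − a` over ℚ, with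
`[L : ℚ] = p^n·φ(p^n) = p^{2n−1}(p−1)`, `[ℚ(w) : ℚ] = p^n` and `ℚ(w) ∩ ℚ(ζ) = ℚ`;
consequently `L` is the normal closure of `ℚ(w)/ℚ` inside `ℂ`. -/
theorem stmt_19 (p n : ℕ) (hp : p.Prime) (hp2 : p ≠ 2) (hn : 1 ≤ n)
    (a : ℚ) (ha : 0 < a) (hpow : ∀ b : ℚ, b ^ p ≠ a)
    (w : ℝ) (hw : 0 < w) (hwa : w ^ (p ^ n) = (a : ℝ))
    (ζ : ℂ) (hζ : IsPrimitiveRoot ζ (p ^ n)) :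
    Polynomial.IsSplittingField ℚ ↥(IntermediateField.adjoin ℚ {ζ, (w : ℂ)})
      (Polynomial.X ^ (p ^ n) - Polynomial.C a) ∧
    Module.finrank ℚ ↥(IntermediateField.adjoin ℚ {ζ, (w : ℂ)}) =
      p ^ n * Nat.totient (p ^ n) ∧
    p ^ n * Nat.totient (p ^ n) = p ^ (2 * n - 1) * (p - 1) ∧
    Module.finrank ℚ ↥(IntermediateField.adjoin ℚ {(w : ℂ)}) = p ^ n ∧
    IntermediateField.adjoin ℚ {(w : ℂ)} ⊓ IntermediateField.adjoin ℚ {ζ} = ⊥ ∧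
    normalClosure ℚ ↥(IntermediateField.adjoin ℚ {(w : ℂ)}) ℂ =
      IntermediateField.adjoin ℚ {ζ, (w : ℂ)} := by
  have hNpos : 0 < p ^ n := pow_pos hp.pos n
  have hN0 : p ^ n ≠ 0 := hNpos.ne'
  haveI : NeZero (p ^ n) := ⟨hN0⟩
  have halgR : algebraMap ℚ ℂ a = (a : ℂ) := eq_ratCast _ a
  have hwC : ((w : ℂ)) ^ (p ^ n) = (a : ℂ) := by
    have := congrArg (Complex.ofReal) hwa
    push_cast at this ⊢
    exact this
  have hw0 : ((w : ℂ)) ≠ 0 := by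
    simp only [ne_eq, Complex.ofReal_eq_zero]
    exact hw.ne'
  have ha0 : (a : ℂ) ≠ 0 := by
    exact_mod_cast ha.ne'
  -- the polynomial f
  set f : ℚ[X] := X ^ (p ^ n) - C a with hf
  have hfm : f.Monic := monic_X_pow_sub_C a hN0
  have hfirr : Irreducible f := X_pow_sub_C_irreducible_of_prime_pow hp hp2 n hpow
  have hroot : aeval ((w : ℂ)) f = 0 := by
    rw [hf, map_sub, map_pow, aeval_X, aeval_C, hwC, halgR, sub_self]
  have hmin : minpoly ℚ ((w : ℂ)) = f :=
    (minpoly.eq_of_irreducible_of_monic hfirr hroot hfm).symm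
  have hwint : IsIntegral ℚ ((w : ℂ)) := ⟨f, hfm, hroot⟩
  have hζint : IsIntegral ℚ ζ := (hζ.isIntegral hNpos).tower_top
  -- description of the roots of f in ℂ
  have hmem : ∀ x : ℂ, x ∈ f.rootSet ℂ ↔ x ^ (p ^ n) = (a : ℂ) := by
    intro x
    rw [mem_rootSet]
    constructor
    · rintro ⟨-, hx⟩
      rw [hf, map_sub, map_pow, aeval_X, aeval_C, halgR, sub_eq_zero] at hx
      exact hx
    · intro hx
      refine ⟨hfm.ne_zero, ?_⟩
      rw [hf, map_sub, map_pow, aeval_X, aeval_C, halgR, hx, sub_self]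
  have hrootmem : ∀ x : ℂ, x ^ (p ^ n) = (a : ℂ) → x ∈ IntermediateField.adjoin ℚ {ζ, (w : ℂ)} := by
    intro x hx
    have hx1 : (x / (w : ℂ)) ^ (p ^ n) = 1 := by
      rw [div_pow, hx, hwC, div_self ha0]
    obtain ⟨i, -, hi⟩ := hζ.eq_pow_of_pow_eq_one hx1
    have hxi : x = ζ ^ i * (w : ℂ) := by
      rw [hi]
      field_simp
    rw [hxi]
    exact mul_mem (pow_mem (subset_adjoin ℚ _ (Set.mem_insert _ _)) i)
      (subset_adjoin ℚ _ (Set.mem_insert_of_mem _ rfl))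
  have hwroot : (w : ℂ) ∈ f.rootSet ℂ := (hmem _).2 hwC
  have hζwroot : (ζ * (w : ℂ)) ∈ f.rootSet ℂ := by
    rw [hmem, mul_pow, hζ.pow_eq_one, one_mul]
    exact hwC
  -- equality of adjoins
  have heq : IntermediateField.adjoin ℚ (f.rootSet ℂ) = IntermediateField.adjoin ℚ {ζ, (w : ℂ)} := by
    apply le_antisymm
    · rw [adjoin_le_iff]
      intro x hx
      exact hrootmem x ((hmem x).1 hx)
    · rw [adjoin_le_iff, Set.insert_subset_iff, Set.singleton_subset_iff]
      constructor
      · have h1 : (ζ * (w : ℂ)) ∈ IntermediateField.adjoin ℚ (f.rootSet ℂ) :=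
          subset_adjoin ℚ _ hζwroot
        have h2 : (w : ℂ) ∈ IntermediateField.adjoin ℚ (f.rootSet ℂ) :=
          subset_adjoin ℚ _ hwroot
        have hz : ζ = (ζ * (w : ℂ)) * ((w : ℂ))⁻¹ := by field_simp
        rw [hz]
        exact mul_mem h1 (inv_mem h2)
      · exact subset_adjoin ℚ _ hwroot
  have hsplits : (f.map (algebraMap ℚ ℂ)).Splits := IsAlgClosed.splits _
  have goal1 : Polynomial.IsSplittingField ℚ ↥(IntermediateField.adjoin ℚ {ζ, (w : ℂ)}) f :=
    heq ▸ adjoin_rootSet_isSplittingField hsplits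
  -- finrank of ℚ(w)
  have goal4 : Module.finrank ℚ ↥(IntermediateField.adjoin ℚ {(w : ℂ)}) = p ^ n := by
    rw [adjoin.finrank hwint, hmin, hf, natDegree_X_pow_sub_C]
  -- the cyclotomic field K
  set K : IntermediateField ℚ ℂ := IntermediateField.adjoin ℚ {ζ} with hK
  have hminζ : minpoly ℚ ζ = cyclotomic (p ^ n) ℚ :=
    (cyclotomic_eq_minpoly_rat hζ hNpos).symm
  have hKrank : Module.finrank ℚ ↥K = Nat.totient (p ^ n) := by
    rw [hK, adjoin.finrank hζint, hminζ, natDegree_cyclotomic]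
  -- a is not a p-th power in K
  have hnotpow : ∀ b : ↥K, b ^ p ≠ algebraMap ℚ ↥K a := by
    intro b hb
    have hbC : ((b : ℂ)) ^ p = (a : ℂ) := by
      have := congrArg (algebraMap ↥K ℂ) hb
      rw [map_pow, ← IsScalarTower.algebraMap_apply, halgR] at this
      exact this
    have hb0 : ((b : ℂ)) ≠ 0 := by
      intro h
      rw [h, zero_pow hp.ne_zero] at hbC
      exact ha0 hbC.symm
    exact stmt19_aux_not_mem p n hp hp2 hn a hpow ζ hζ (b : ℂ) hb0 hbC b.2
  have hirrK : Irreducible ((X : (↥K)[X]) ^ (p ^ n) - C (algebraMap ℚ ↥K a)) :=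
    X_pow_sub_C_irreducible_of_prime_pow hp hp2 n hnotpow
  have hKmonic : ((X : (↥K)[X]) ^ (p ^ n) - C (algebraMap ℚ ↥K a)).Monic :=
    monic_X_pow_sub_C _ hN0
  have hKroot : aeval ((w : ℂ)) ((X : (↥K)[X]) ^ (p ^ n) - C (algebraMap ℚ ↥K a)) = 0 := by
    rw [map_sub, map_pow, aeval_X, aeval_C, ← IsScalarTower.algebraMap_apply, halgR, hwC, sub_self]
  have hminKw : minpoly ↥K ((w : ℂ)) = (X : (↥K)[X]) ^ (p ^ n) - C (algebraMap ℚ ↥K a) :=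
    (minpoly.eq_of_irreducible_of_monic hirrK hKroot hKmonic).symm
  have hwintK : IsIntegral ↥K ((w : ℂ)) := ⟨_, hKmonic, hKroot⟩
  have hKwrank : Module.finrank ↥K ↥(IntermediateField.adjoin ↥K {((w : ℂ))}) = p ^ n := by
    rw [adjoin.finrank hwintK, hminKw, natDegree_X_pow_sub_C]
  -- tower
  have hadj_eq : (IntermediateField.adjoin ↥K {((w : ℂ))}).restrictScalars ℚ =
      IntermediateField.adjoin ℚ {ζ, (w : ℂ)} := by
    rw [hK]; exact (adjoin_adjoin_left ℚ {ζ} {(w : ℂ)}).trans (by rw [Set.singleton_union])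
  haveI : FiniteDimensional ℚ ↥K := IntermediateField.adjoin.finiteDimensional hζint
  haveI : FiniteDimensional ↥K ↥(IntermediateField.adjoin ↥K {((w : ℂ))}) :=
    IntermediateField.adjoin.finiteDimensional hwintK
  have htower : Module.finrank ℚ ↥K *
      Module.finrank ↥K ↥(IntermediateField.adjoin ↥K {((w : ℂ))}) =
      Module.finrank ℚ ↥(IntermediateField.adjoin ↥K {((w : ℂ))}) :=
    Module.finrank_mul_finrank ℚ ↥K ↥(IntermediateField.adjoin ↥K {((w : ℂ))})
  have hrs : Module.finrank ℚ ↥((IntermediateField.adjoin ↥K {((w : ℂ))}).restrictScalars ℚ) =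
      Module.finrank ℚ ↥(IntermediateField.adjoin ↥K {((w : ℂ))}) := rfl
  have goal2 : Module.finrank ℚ ↥(IntermediateField.adjoin ℚ {ζ, (w : ℂ)}) =
      p ^ n * Nat.totient (p ^ n) := by
    rw [← hadj_eq, hrs, ← htower, hKrank, hKwrank, mul_comm]
  have goal3 : p ^ n * Nat.totient (p ^ n) = p ^ (2 * n - 1) * (p - 1) := by
    rw [Nat.totient_prime_pow hp (by omega : 0 < n), ← mul_assoc, ← pow_add]
    congr 2
    omega
  -- intersection is trivial
  haveI : FiniteDimensional ℚ ↥(IntermediateField.adjoin ℚ {((w : ℂ))}) :=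
    IntermediateField.adjoin.finiteDimensional hwint
  have hsup : IntermediateField.adjoin ℚ {((w : ℂ))} ⊔ K =
      IntermediateField.adjoin ℚ {ζ, (w : ℂ)} := by
    rw [hK, ← adjoin_union, Set.union_comm, Set.singleton_union]
  have hld : (IntermediateField.adjoin ℚ {((w : ℂ))}).LinearDisjoint K := by
    apply IntermediateField.LinearDisjoint.of_finrank_sup
    rw [hsup, goal2, goal4, hKrank]
  have goal5 : IntermediateField.adjoin ℚ {((w : ℂ))} ⊓ IntermediateField.adjoin ℚ {ζ} = ⊥ :=
    hld.inf_eq_bot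
  -- normal closure
  have goal6 : normalClosure ℚ ↥(IntermediateField.adjoin ℚ {(w : ℂ)}) ℂ =
      IntermediateField.adjoin ℚ {ζ, (w : ℂ)} := by
    apply le_antisymm
    · rw [normalClosure_le_iff]
      intro g
      -- the image of the generator is a root of f
      have htop : (⊤ : IntermediateField ℚ ↥(IntermediateField.adjoin ℚ {(w : ℂ)})) =
          IntermediateField.adjoin ℚ
            {(⟨(w : ℂ), IntermediateField.mem_adjoin_simple_self ℚ _⟩ :
              ↥(IntermediateField.adjoin ℚ {(w : ℂ)}))} := by
        apply (IntermediateField.adjoin ℚ {(w : ℂ)}).lift_injective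
        erw [lift_adjoin_simple, lift_top]
      rw [AlgHom.fieldRange_eq_map, htop, adjoin_map, Set.image_singleton, adjoin_le_iff]
      rintro x rfl
      apply hrootmem
      have : aeval (g ⟨(w : ℂ), IntermediateField.mem_adjoin_simple_self ℚ _⟩) f = 0 := by
        rw [aeval_algHom_apply]
        have : aeval (⟨(w : ℂ), IntermediateField.mem_adjoin_simple_self ℚ _⟩ :
            ↥(IntermediateField.adjoin ℚ {(w : ℂ)})) f = 0 := by
          apply (algebraMap ↥(IntermediateField.adjoin ℚ {(w : ℂ)}) ℂ).injective
          rw [map_zero, ← aeval_algebraMap_apply]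
          exact hroot
        rw [this, map_zero]
      rw [hf, map_sub, map_pow, aeval_X, aeval_C, halgR, sub_eq_zero] at this
      exact this
    · rw [adjoin_le_iff]
      have hwmem : (w : ℂ) ∈ normalClosure ℚ ↥(IntermediateField.adjoin ℚ {(w : ℂ)}) ℂ :=
        IntermediateField.le_normalClosure _ (IntermediateField.mem_adjoin_simple_self ℚ _)
      haveI : FiniteDimensional ℚ ↥(IntermediateField.adjoin ℚ {(w : ℂ)}) :=
        IntermediateField.adjoin.finiteDimensional hwint
      haveI : Normal ℚ ↥(normalClosure ℚ ↥(IntermediateField.adjoin ℚ {(w : ℂ)}) ℂ) := by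
        have hnc : IsNormalClosure ℚ ↥(IntermediateField.adjoin ℚ {(w : ℂ)})
            ↥(normalClosure ℚ ↥(IntermediateField.adjoin ℚ {(w : ℂ)}) ℂ) :=
          Algebra.IsAlgebraic.isNormalClosure_normalClosure
            (fun x => IsAlgClosed.splits _)
        exact hnc.normal
      set N := normalClosure ℚ ↥(IntermediateField.adjoin ℚ {(w : ℂ)}) ℂ with hNdef
      -- minpoly of w as element of N is f, and it splits in N
      have hwN : aeval (⟨(w : ℂ), hwmem⟩ : ↥N) f = 0 := by
        apply (algebraMap ↥N ℂ).injective
        rw [map_zero, ← aeval_algebraMap_apply]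
        exact hroot
      have hminN : minpoly ℚ (⟨(w : ℂ), hwmem⟩ : ↥N) = f :=
        (minpoly.eq_of_irreducible_of_monic hfirr hwN hfm).symm
      have hsplitN : (f.map (algebraMap ℚ ↥N)).Splits :=
        hminN ▸ Normal.splits inferInstance (⟨(w : ℂ), hwmem⟩ : ↥N)
      have himgN := hsplitN.image_rootSet (IsScalarTower.toAlgHom ℚ ↥N ℂ)
      rw [Set.insert_subset_iff, Set.singleton_subset_iff]
      constructor
      · -- ζ ∈ N : since ζ * w is a root of f and w ∈ N
        have hmemN : (ζ * (w : ℂ)) ∈ f.rootSet ℂ := hζwroot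
        rw [← himgN] at hmemN
        obtain ⟨y, -, hy⟩ := hmemN
        have hyN : (ζ * (w : ℂ)) ∈ N := by
          rw [← hy]
          exact y.2
        have hz : ζ = (ζ * (w : ℂ)) * ((w : ℂ))⁻¹ := by field_simp
        rw [hz]
        exact mul_mem hyN (inv_mem hwmem)
      · exact hwmem
  exact ⟨goal1, goal2, goal3, goal4, goal5, goal6⟩
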